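/- Let W be a complete discrete valuation ring (e.g. the ring of Witt vectors of a perfect field) and let M be a finitely generated W-module equipped with an injective additive endomorphism V such that M is V-adically separated and complete and M/VM has finite length. If the torsion submodule T of M satisfies V(T) ⊆ T, then T = 0; that is, M is a finite free W-module. -/

import Mathlib

open IsDiscreteValuationRing in
lemma aux_artinian_quot (W : Type*) [CommRing W] [IsDomain W] [IsDiscreteValuationRing W]
    {r : W} (hr : r ≠ 0) : IsArtinian W (W ⧸ (Ideal.span {r} : Ideal W)) := by
  obtain ⟨ϖ, hϖ⟩ := exists_irreducible W
  obtain ⟨n, hn⟩ := associated_pow_irreducible hr hϖ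
  have hspan : (Ideal.span {r} : Ideal W) = Ideal.span {ϖ ^ n} :=
    Ideal.span_singleton_eq_span_singleton.mpr hn
  have hfinset : {p' : Submodule W W | (Ideal.span {r} : Ideal W) ≤ p'}.Finite := by
    refine Set.Finite.subset ((Set.finite_Iic n).image
      (fun j => (Ideal.span {ϖ ^ j} : Ideal W))) ?_
    intro I hI
    have hmem : ϖ ^ n ∈ I := hI (hspan ▸ Ideal.subset_span rfl)
    have hne : (I : Ideal W) ≠ ⊥ := by
      intro h
      exact pow_ne_zero n hϖ.ne_zero (by simpa [h] using hmem)
    obtain ⟨m, hm⟩ := ideal_eq_span_pow_irreducible hne hϖ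
    have hdvd : ϖ ^ m ∣ ϖ ^ n := Ideal.mem_span_singleton.mp (hm ▸ hmem)
    have hmn : m ≤ n := (pow_dvd_pow_iff hϖ.ne_zero hϖ.not_isUnit).mp hdvd
    exact ⟨m, hmn, hm.symm⟩
  have : Finite {p' : Submodule W W // (Ideal.span {r} : Ideal W) ≤ p'} :=
    hfinset.to_subtype
  have : Finite (Submodule W (W ⧸ (Ideal.span {r} : Ideal W))) :=
    Finite.of_equiv {p' : Submodule W W // (Ideal.span {r} : Ideal W) ≤ p'} (Submodule.comapMkQRelIso (Ideal.span {r})).toEquiv.symm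
  exact Finite.to_wellFoundedLT

/-- A finitely generated module killed by a nonzero scalar over a DVR is Artinian. -/
lemma aux_artinian_of_ann (W : Type*) [CommRing W] [IsDomain W] [IsDiscreteValuationRing W]
    (N : Type*) [AddCommGroup N] [Module W N] [Module.Finite W N]
    {r : W} (hr : r ≠ 0) (hann : ∀ x : N, r • x = 0) : IsArtinian W N := by
  classical
  haveI := aux_artinian_quot W hr
  obtain ⟨S, hS⟩ := Module.Finite.fg_top (R := W) (M := N)
  -- for each generator, a map `W ⧸ (r) →ₗ N`
  let ψ : ↥S → (W ⧸ (Ideal.span {r} : Ideal W)) →ₗ[W] N := fun g =>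
    Submodule.liftQ _ (LinearMap.toSpanSingleton W N g) (by
      rw [Ideal.span_le]
      rintro x rfl
      simp [LinearMap.mem_ker, LinearMap.toSpanSingleton_apply, hann])
  let φ : (↥S → (W ⧸ (Ideal.span {r} : Ideal W))) →ₗ[W] N :=
    LinearMap.lsum W _ ℕ ψ
  have hφ : Function.Surjective φ := by
    rw [← LinearMap.range_eq_top, ← top_le_iff, ← hS, Submodule.span_le]
    intro g hg
    refine ⟨Pi.single (⟨g, hg⟩ : ↥S) (Submodule.Quotient.mk 1), ?_⟩
    simp only [φ, LinearMap.lsum_apply, LinearMap.coe_sum, Finset.sum_apply,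
      LinearMap.coe_comp, Function.comp_apply, LinearMap.proj_apply]
    rw [Finset.sum_eq_single (⟨g, hg⟩ : ↥S)]
    · simp only [ψ, Pi.single_eq_same]
      rw [Submodule.liftQ_apply]
      simp [LinearMap.toSpanSingleton_apply]
    · intro b _ hb
      rw [Pi.single_eq_of_ne hb]
      exact map_zero _
    · simp
  exact isArtinian_of_surjective _ φ hφ


/-!
STATEMENT 0: Let `W` be a complete discrete valuation ring and `M` a finitely generated
`W`-module equipped with an injective additive endomorphism `V` such that `M` is `V`-adically
separated and complete and each `M/V^n M` has finite length.  If the torsion submodule `T` of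
`M` satisfies `V(T) ⊆ T`, then `T = 0`, i.e. `M` is a finite free `W`-module.

The `V`-adic filtration is encoded by a family of submodules `F n` whose underlying sets are
the images of `V^[n]` (this accounts for the possibly semilinear nature of `V`).
-/
theorem stmt_0
    (W : Type*) [CommRing W] [IsDomain W] [IsDiscreteValuationRing W]
    [IsAdicComplete (IsLocalRing.maximalIdeal W) W]
    (M : Type*) [AddCommGroup M] [Module W M] [Module.Finite W M]
    (V : M →+ M) (hVinj : Function.Injective V)
    (F : ℕ → Submodule W M)
    (hF : ∀ n, (F n : Set M) = Set.range ((V : M → M)^[n]))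
    -- `M` is `V`-adically separated
    (hsep : ⨅ n, F n = ⊥)
    -- `M` is `V`-adically complete
    (hcomplete : ∀ x : ℕ → M, (∀ n, x (n + 1) - x n ∈ F n) → ∃ L, ∀ n, L - x n ∈ F n)
    -- `M/V^n M` has finite length over `W`
    (hlen : ∀ n, IsFiniteLength W (M ⧸ F n))
    -- the torsion submodule is stable under `V`
    (hT : ∀ x ∈ Submodule.torsion W M, V x ∈ Submodule.torsion W M) :
    Submodule.torsion W M = ⊥ ∧ Module.Free W M := by
  classical
  set T := Submodule.torsion W M with hTdef
  -- `F` is antitone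
  have hFmem : ∀ n (x : M), x ∈ F n ↔ ∃ y, (V : M → M)^[n] y = x := by
    intro n x
    constructor
    · intro h
      have : x ∈ (F n : Set M) := h
      rw [hF n] at this
      exact this
    · intro h
      have : x ∈ (F n : Set M) := by rw [hF n]; exact h
      exact this
  have hFanti : Antitone F := by
    refine antitone_nat_of_succ_le fun n => ?_
    intro x hx
    obtain ⟨y, hy⟩ := (hFmem (n+1) x).mp hx
    exact (hFmem n x).mpr ⟨V y, by rw [← hy, Function.iterate_succ_apply]⟩
  -- `T` is a finitely generated module
  haveI : Module.Finite W ↥T := Module.Finite.iff_fg.mpr (IsNoetherian.noetherian T)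
  -- `T` has a nonzero annihilator
  have hne := Submodule.annihilator_top_inter_nonZeroDivisors
    (R := W) (M := ↥T) (Submodule.torsion_isTorsion)
  obtain ⟨r, hr_ann, hr_nzd⟩ := hne
  have hr0 : r ≠ 0 := nonZeroDivisors.ne_zero hr_nzd
  have hann : ∀ x : ↥T, r • x = 0 := fun x =>
    Submodule.mem_annihilator.mp hr_ann x Submodule.mem_top
  -- `T` is Artinian
  haveI : IsArtinian W ↥T := aux_artinian_of_ann W ↥T hr0 hann
  -- the descending chain `T ⊓ F n` stabilizes
  let f : ℕ →o (Submodule W ↥T)ᵒᵈ :=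
    ⟨fun n => Submodule.comap T.subtype (F n), fun a b hab => Submodule.comap_mono (hFanti hab)⟩
  obtain ⟨N, hN⟩ := IsArtinian.monotone_stabilizes f
  -- the stabilized value is `⊥`
  have hbot : Submodule.comap T.subtype (F N) = ⊥ := by
    rw [eq_bot_iff]
    intro x hx
    have hxall : ∀ k, (x : M) ∈ F k := by
      intro k
      have heq : f N = f (max N k) := hN (max N k) (le_max_left _ _)
      have h1 : x ∈ Submodule.comap T.subtype (F (max N k)) := by
        rw [show Submodule.comap T.subtype (F (max N k)) = f (max N k) from rfl, ← heq]
        exact hx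
      exact hFanti (le_max_right N k) h1
    have hmem : (x : M) ∈ ⨅ n, F n := Submodule.mem_iInf _ |>.mpr hxall
    rw [hsep, Submodule.mem_bot] at hmem
    simpa [Submodule.mem_bot] using Subtype.ext (hmem : (x : M) = (0 : ↥T).val)
  -- iterates of `V` preserve `T`
  have hiter : ∀ (n : ℕ) (x : M), x ∈ T → (V : M → M)^[n] x ∈ T := by
    intro n
    induction n with
    | zero => intro x hx; simpa using hx
    | succ n ih =>
      intro x hx
      rw [Function.iterate_succ_apply']
      exact hT _ (ih x hx)
  -- conclude `T = ⊥`
  have htors : T = ⊥ := by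
    rw [eq_bot_iff]
    intro x hx
    have h1 : (V : M → M)^[N] x ∈ T := hiter N x hx
    have h2 : (V : M → M)^[N] x ∈ F N := (hFmem N _).mpr ⟨x, rfl⟩
    have : (⟨(V : M → M)^[N] x, h1⟩ : ↥T) ∈ Submodule.comap T.subtype (F N) := h2
    rw [hbot] at this
    have h3 : (V : M → M)^[N] x = 0 := by simpa using congrArg Subtype.val this
    have h4 : (V : M → M)^[N] (0 : M) = 0 := by
      simp [iterate_map_zero]
    have := (hVinj.iterate N) (h3.trans h4.symm)
    simp [this]
  haveI : Module.IsTorsionFree W M :=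
    Submodule.isTorsionFree_iff_torsion_eq_bot.mpr htors
  exact ⟨htors, Module.free_of_finite_type_torsion_free'⟩
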